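/- The order dimension of a finite poset P is equal to the smallest d such that there exist posets Q₁,…,Q_d, induced subposets P₁,…,P_d of P, and order-preserving maps η_i : P_i → Q_i for i = 1,…,d, with the property that for every subcritical pair (j,m) of P there is some i with j,m ∈ P_i and η_i(m) < η_i(j). -/

import Mathlib

/-- `(j, m)` is a subcritical pair in the poset `P`: `j ≰ m`, everything strictly below `j`
is below `m`, and everything strictly above `m` is above `j`. -/
def Subcritical {P : Type*} [PartialOrder P] (j m : P) : Prop :=
  ¬ j ≤ m ∧ (∀ x, x < j → x ≤ m) ∧ (∀ x, m < x → j ≤ x)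

/-- The order dimension of a poset `P`: the smallest `d` such that `P` embeds as an induced
subposet of ℝᵈ with the componentwise order. -/
noncomputable def orderDim (P : Type*) [PartialOrder P] : ℕ :=
  sInf {d : ℕ | ∃ f : P → (Fin d → ℝ), ∀ x y : P, x ≤ y ↔ ∀ i, f x i ≤ f y i}

/-- If `x ≰ y` in a finite poset, there is a subcritical pair `(j,m)` with `j ≤ x`, `y ≤ m`. -/
lemma exists_subcritical_aux {P : Type*} [PartialOrder P] [Fintype P] {x y : P} (h : ¬ x ≤ y) :
    ∃ j m : P, Subcritical j m ∧ j ≤ x ∧ y ≤ m := by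
  classical
  obtain ⟨j, hjS, hjmin⟩ : ∃ j ∈ Finset.univ.filter (fun j => j ≤ x ∧ ¬ j ≤ y),
      ∀ z ∈ Finset.univ.filter (fun j => j ≤ x ∧ ¬ j ≤ y), ¬ z < j := (Finset.exists_minimal
    (s := Finset.univ.filter fun j => j ≤ x ∧ ¬ j ≤ y) ⟨x, by simp [h]⟩).imp
      fun _ h' => ⟨h'.1, fun z hz hlt => hlt.not_ge (h'.2 hz hlt.le)⟩
  simp only [Finset.mem_filter, Finset.mem_univ, true_and] at hjS hjmin
  obtain ⟨hjx, hjy⟩ := hjS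
  obtain ⟨m, hmT, hmmax⟩ : ∃ m ∈ Finset.univ.filter (fun m => y ≤ m ∧ ¬ j ≤ m),
      ∀ z ∈ Finset.univ.filter (fun m => y ≤ m ∧ ¬ j ≤ m), ¬ m < z := (Finset.exists_maximal
    (s := Finset.univ.filter fun m => y ≤ m ∧ ¬ j ≤ m) ⟨y, by simp [hjy]⟩).imp
      fun _ h' => ⟨h'.1, fun z hz hlt => hlt.not_ge (h'.2 hz hlt.le)⟩
  simp only [Finset.mem_filter, Finset.mem_univ, true_and] at hmT hmmax
  obtain ⟨hym, hjm⟩ := hmT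
  have hbelow : ∀ z, z < j → z ≤ y := by
    intro z hz
    by_contra hzy
    exact hjmin z ⟨le_trans hz.le hjx, hzy⟩ hz
  refine ⟨j, m, ⟨hjm, ?_, ?_⟩, hjx, hym⟩
  · intro z hz
    exact le_trans (hbelow z hz) hym
  · intro z hz
    by_contra hjz
    exact hmmax z ⟨le_trans hym hz.le, hjz⟩ hz

/-- The hard direction: from subcritical-reversing partial maps, build an embedding into ℝᵈ. -/
lemma embed_of_data {P : Type*} [PartialOrder P] [Fintype P] {d : ℕ}
    (Q : Fin d → Type) (iQ : ∀ i, PartialOrder (Q i)) (Ps : Fin d → Set P)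
    (η : ∀ i, ↥(Ps i) → Q i)
    (hmono : ∀ i, @Monotone ↥(Ps i) (Q i) _ (iQ i).toPreorder (η i))
    (hrev : ∀ j m : P, Subcritical j m →
      ∃ (i : Fin d) (hj : j ∈ Ps i) (hm : m ∈ Ps i),
        @LT.lt (Q i) ((iQ i).toPreorder.toLT) (η i ⟨m, hm⟩) (η i ⟨j, hj⟩)) :
    ∃ f : P → (Fin d → ℝ), ∀ x y : P, x ≤ y ↔ ∀ i, f x i ≤ f y i := by
  classical
  haveI : ∀ i, Fintype ↥(Ps i) := fun i => Fintype.ofFinite _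
  set n := Fintype.card P with hn
  -- rank of the image in Q i, transported to ℕ
  set θ : ∀ i, ↥(Ps i) → ℕ :=
    fun i x => Set.ncard {z : ↥(Ps i) | (iQ i).toPreorder.le (η i z) (η i x)} with hθ
  have hθmono : ∀ i (u v : ↥(Ps i)), (iQ i).toPreorder.le (η i u) (η i v) → θ i u ≤ θ i v := by
    intro i u v huv
    letI := iQ i
    exact Set.ncard_le_ncard (fun z hz => le_trans hz huv) (Set.toFinite _)
  have hθstrict : ∀ i (u v : ↥(Ps i)),
      (iQ i).toPreorder.toLT.lt (η i u) (η i v) → θ i u < θ i v := by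
    intro i u v huv
    letI := iQ i
    refine Set.ncard_lt_ncard ⟨fun z hz => le_trans hz huv.le, fun hsub => ?_⟩ (Set.toFinite _)
    exact absurd (hsub (le_refl (η i v))) (not_le_of_gt huv)
  -- rank in P
  set r : P → ℕ := fun x => Set.ncard {z : P | z ≤ x} with hr
  have hrmono : ∀ x y : P, x ≤ y → r x ≤ r y := fun x y hxy =>
    Set.ncard_le_ncard (fun z hz => le_trans hz hxy) (Set.toFinite _)
  have hrpos : ∀ x : P, 0 < r x := fun x =>
    (Set.ncard_pos (Set.toFinite _)).mpr ⟨x, le_refl x⟩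
  have hrle : ∀ x : P, r x ≤ n := by
    intro x
    have := Set.ncard_le_ncard (Set.subset_univ {z : P | z ≤ x}) (Set.toFinite _)
    rwa [Set.ncard_univ, Nat.card_eq_fintype_card] at this
  -- partial sup of θ below x
  set a : Fin d → P → ℕ :=
    fun i x => (Finset.univ.filter fun z : ↥(Ps i) => (z : P) ≤ x).sup (θ i) with ha
  have hamono : ∀ i (x y : P), x ≤ y → a i x ≤ a i y := by
    intro i x y hxy
    apply Finset.sup_mono
    intro z hz
    simp only [Finset.mem_filter, Finset.mem_univ, true_and] at hz ⊢
    exact le_trans hz hxy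
  refine ⟨fun x i => ((n * a i x + r x : ℕ) : ℝ), fun x y => ⟨fun hxy i => ?_, fun hf => ?_⟩⟩
  · show ((n * a i x + r x : ℕ) : ℝ) ≤ ((n * a i y + r y : ℕ) : ℝ)
    exact_mod_cast Nat.add_le_add (Nat.mul_le_mul_left _ (hamono i x y hxy)) (hrmono x y hxy)
  · by_contra hxy
    obtain ⟨j, m, hsc, hjx, hym⟩ := exists_subcritical_aux hxy
    obtain ⟨i, hj, hm, hlt⟩ := hrev j m hsc
    -- a i y < a i x
    have h1 : a i y ≤ θ i ⟨m, hm⟩ := by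
      apply Finset.sup_le
      intro z hz
      simp only [Finset.mem_filter, Finset.mem_univ, true_and] at hz
      have hzm : z ≤ (⟨m, hm⟩ : ↥(Ps i)) := Subtype.coe_le_coe.mp (le_trans hz hym)
      exact hθmono i z ⟨m, hm⟩ (hmono i hzm)
    have h2 : θ i ⟨m, hm⟩ < θ i ⟨j, hj⟩ := hθstrict i _ _ hlt
    have h3 : θ i ⟨j, hj⟩ ≤ a i x := by
      apply Finset.le_sup
      simp only [Finset.mem_filter, Finset.mem_univ, true_and]
      exact hjx
    have h4 : a i y + 1 ≤ a i x := lt_of_le_of_lt h1 (lt_of_lt_of_le h2 h3)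
    have h5 : n * a i y + n ≤ n * a i x := by
      have := Nat.mul_le_mul_left n h4
      rwa [Nat.mul_add, Nat.mul_one] at this
    have hkey : n * a i y + r y < n * a i x + r x :=
      calc n * a i y + r y ≤ n * a i y + n := Nat.add_le_add_left (hrle y) _
        _ ≤ n * a i x := h5
        _ < n * a i x + r x := Nat.lt_add_of_pos_right (hrpos x)
    have := hf i
    have hcast : ((n * a i y + r y : ℕ) : ℝ) < ((n * a i x + r x : ℕ) : ℝ) := by
      exact_mod_cast hkey
    exact absurd this (not_le.mpr hcast)

/-- **Proposition (Reading, Proposition 13).** The order dimension of a finite poset `P` is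
the smallest `d` such that there exist posets `Q₁, …, Q_d`, induced subposets `P₁, …, P_d`
of `P`, and order-preserving maps `η_i : P_i → Q_i`, such that for every subcritical pair
`(j,m)` of `P` there is some `i` with `j, m ∈ P_i` and `η_i(m) < η_i(j)`. -/
theorem orderDim_eq_subcritical_reversing_partial_maps
    (P : Type*) [PartialOrder P] [Fintype P] :
    orderDim P = sInf {d : ℕ | ∃ (Q : Fin d → Type) (iQ : ∀ i, PartialOrder (Q i))
      (Ps : Fin d → Set P) (η : ∀ i, ↥(Ps i) → Q i),
      (∀ i, @Monotone ↥(Ps i) (Q i) _ (iQ i).toPreorder (η i)) ∧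
      ∀ j m : P, Subcritical j m →
        ∃ (i : Fin d) (hj : j ∈ Ps i) (hm : m ∈ Ps i),
          @LT.lt (Q i) ((iQ i).toPreorder.toLT) (η i ⟨m, hm⟩) (η i ⟨j, hj⟩)} := by
  unfold orderDim
  congr 1
  ext d
  simp only [Set.mem_setOf_eq]
  constructor
  · rintro ⟨f, hf⟩
    refine ⟨fun _ => ℝ, fun _ => inferInstance, fun _ => Set.univ,
      fun i z => f (z : P) i, fun i u v huv => (hf u v).mp huv i, fun j m hsc => ?_⟩
    have : ¬ ∀ i, f j i ≤ f m i := fun h => hsc.1 ((hf j m).mpr h)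
    push_neg at this
    obtain ⟨i, hi⟩ := this
    exact ⟨i, Set.mem_univ j, Set.mem_univ m, hi⟩
  · rintro ⟨Q, iQ, Ps, η, hmono, hrev⟩
    exact embed_of_data Q iQ Ps η hmono hrev
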